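/- For every δ ∈ (0, 1/3) there exists a constant C > 0, depending only on δ, such that for all (f₀, a₀), (f₁, a₁) ∈ ℝ × ℝ³ with 0 < f_i ≤ 1 and f_i² - |a_i|² - 1/3 ≥ δ (i = 0, 1), setting g = f₁ - f₀ and b = a₁ - a₀, the following inequality holds: [2(f₁² + |a₁|² - 1)f₁ - 2(f₀² + |a₀|² - 1)f₀] g + (2 f₁² a₁ - 2 f₀² a₀) · b ≥ C (g² + |b|²). -/

import Mathlib

lemma point (δ f σ g h : ℝ) (hδ0 : 0 < δ) (hδ1 : δ < 1/3)
    (hf : 0 < f) (hf' : f ≤ 1) (hK : δ ≤ f^2 - σ^2 - 1/3) :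
    δ/2 * (g^2 + h^2) ≤ 2*(3*f^2+σ^2-1)*g^2 + 8*f*σ*g*h + 2*f^2*h^2 := by
  have he : 0 ≤ f^2 - σ^2 - 1/3 - δ := by linarith
  have hD : 0 ≤ 4*(6*f^2+2*σ^2-2-δ/2)*(2*f^2-δ/2) - (8*f*σ)^2 := by
    nlinarith [mul_nonneg hδ0.le he, mul_nonneg (sq_nonneg σ) he, sq_nonneg (f^2-σ^2-1/3-δ),
      mul_nonneg hδ0.le (sq_nonneg σ), mul_pos hδ0 hδ0]
  have hC : 0 < 2*f^2 - δ/2 := by nlinarith [sq_nonneg σ]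
  nlinarith [sq_nonneg (8*f*σ*g + (4*f^2 - δ)*h), mul_nonneg hD (sq_nonneg g),
    mul_pos hC hC, sq_nonneg g, sq_nonneg h]

lemma midK (δ f₀ f₁ s t : ℝ) (hδ0 : 0 < δ)
    (hf0 : 0 < f₀) (hs : 0 ≤ s) (hK0 : δ ≤ f₀^2 - s^2 - 1/3)
    (hf1 : 0 < f₁) (ht : 0 ≤ t) (hK1 : δ ≤ f₁^2 - t^2 - 1/3) :
    δ ≤ ((f₀+f₁)/2)^2 - ((s+t)/2)^2 - 1/3 := by
  have h1 : (1/3 + δ + s*t)^2 ≤ (f₀*f₁)^2 := by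
    nlinarith [sq_nonneg (s-t), mul_nonneg hs ht, sq_nonneg (s*t),
      mul_nonneg (mul_nonneg hs ht) (sub_nonneg.2 hK0), mul_nonneg hδ0.le (sq_nonneg (s-t)),
      mul_nonneg (mul_nonneg hs ht) (sub_nonneg.2 hK1), sq_nonneg (f₀^2 - f₁^2),
      sq_nonneg (s^2-t^2), mul_nonneg (sub_nonneg.2 hK0) (sub_nonneg.2 hK1)]
  have h2 : 1/3 + δ + s*t ≤ f₀*f₁ := by
    have hpos : 0 < 1/3 + δ + s*t := by positivity
    nlinarith [mul_pos hf0 hf1]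
  nlinarith

lemma colinear (δ f₀ f₁ s t : ℝ) (hδ0 : 0 < δ) (hδ1 : δ < 1/3)
    (hf0 : 0 < f₀) (hf0' : f₀ ≤ 1) (hs : 0 ≤ s) (hK0 : δ ≤ f₀^2 - s^2 - 1/3)
    (hf1 : 0 < f₁) (hf1' : f₁ ≤ 1) (ht : 0 ≤ t) (hK1 : δ ≤ f₁^2 - t^2 - 1/3) :
    δ/2 * ((f₁-f₀)^2 + (t-s)^2) ≤
      2*(f₁-f₀)*((f₁^2+t^2-1)*f₁ - (f₀^2+s^2-1)*f₀) + 2*(t-s)*(f₁^2*t - f₀^2*s) := by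
  set g := f₁ - f₀
  set h := t - s
  have q0 := point δ f₀ s g h hδ0 hδ1 hf0 hf0' hK0
  have q1 := point δ f₁ t g h hδ0 hδ1 hf1 hf1' hK1
  have qm := point δ ((f₀+f₁)/2) ((s+t)/2) g h hδ0 hδ1 (by linarith) (by linarith)
    (midK δ f₀ f₁ s t hδ0 hf0 hs hK0 hf1 ht hK1)
  have key : 6 * (2*(f₁-f₀)*((f₁^2+t^2-1)*f₁ - (f₀^2+s^2-1)*f₀) + 2*(t-s)*(f₁^2*t - f₀^2*s))
      = (2*(3*f₀^2+s^2-1)*g^2 + 8*f₀*s*g*h + 2*f₀^2*h^2)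
        + 4*(2*(3*((f₀+f₁)/2)^2+((s+t)/2)^2-1)*g^2 + 8*((f₀+f₁)/2)*((s+t)/2)*g*h + 2*((f₀+f₁)/2)^2*h^2)
        + (2*(3*f₁^2+t^2-1)*g^2 + 8*f₁*t*g*h + 2*f₁^2*h^2) := by
    simp only [g, h]; ring
  linarith

lemma fullscalar (δ f₀ f₁ s t p : ℝ) (hδ0 : 0 < δ) (hδ1 : δ < 1/3)
    (hf0 : 0 < f₀) (hf0' : f₀ ≤ 1) (hs : 0 ≤ s) (hK0 : δ ≤ f₀^2 - s^2 - 1/3)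
    (hf1 : 0 < f₁) (hf1' : f₁ ≤ 1) (ht : 0 ≤ t) (hK1 : δ ≤ f₁^2 - t^2 - 1/3)
    (hp : p ≤ s*t) :
    δ/2 * ((f₁-f₀)^2 + (s^2 + t^2 - 2*p)) ≤
      (2*(f₁^2 + t^2 - 1)*f₁ - 2*(f₀^2 + s^2 - 1)*f₀) * (f₁ - f₀)
        + (2*f₁^2*t^2 - 2*(f₁^2+f₀^2)*p + 2*f₀^2*s^2) := by
  have hcol := colinear δ f₀ f₁ s t hδ0 hδ1 hf0 hf0' hs hK0 hf1 hf1' ht hK1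
  have hsq0 : 1/3 + δ ≤ f₀^2 := by nlinarith [sq_nonneg s]
  have hsq1 : 1/3 + δ ≤ f₁^2 := by nlinarith [sq_nonneg t]
  have hkey : 0 ≤ (2*(f₁^2+f₀^2) - δ) * (s*t - p) := by
    apply mul_nonneg (by linarith) (by linarith)
  nlinarith

theorem stmt10 (δ : ℝ) (hδ : δ ∈ Set.Ioo (0:ℝ) (1/3)) :
    ∃ C > 0, ∀ (f₀ f₁ : ℝ) (a₀ a₁ : EuclideanSpace ℝ (Fin 3)),
      0 < f₀ → f₀ ≤ 1 → δ ≤ f₀^2 - ‖a₀‖^2 - 1/3 →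
      0 < f₁ → f₁ ≤ 1 → δ ≤ f₁^2 - ‖a₁‖^2 - 1/3 →
      C * ((f₁ - f₀)^2 + ‖a₁ - a₀‖^2) ≤
        (2*(f₁^2 + ‖a₁‖^2 - 1)*f₁ - 2*(f₀^2 + ‖a₀‖^2 - 1)*f₀) * (f₁ - f₀)
          + (inner ℝ ((2*f₁^2) • a₁ - (2*f₀^2) • a₀) (a₁ - a₀) : ℝ) := by
  obtain ⟨hδ0, hδ1⟩ := hδ
  refine ⟨δ/2, by linarith, ?_⟩
  intro f₀ f₁ a₀ a₁ hf0 hf0' hK0 hf1 hf1' hK1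
  set s := ‖a₀‖ with hs_def
  set t := ‖a₁‖ with ht_def
  set p : ℝ := inner ℝ a₀ a₁ with hp_def
  have hp : p ≤ s*t := real_inner_le_norm a₀ a₁
  have hnorm : ‖a₁ - a₀‖^2 = t^2 - 2*p + s^2 := by
    have hcomm : (inner ℝ a₁ a₀ : ℝ) = p := real_inner_comm a₀ a₁
    rw [← real_inner_self_eq_norm_sq, inner_sub_left, inner_sub_right, inner_sub_right,
      real_inner_self_eq_norm_sq, real_inner_self_eq_norm_sq]
    rw [hp_def] at hcomm ⊢
    rw [hcomm]; ring
  have hinner : (inner ℝ ((2*f₁^2) • a₁ - (2*f₀^2) • a₀) (a₁ - a₀) : ℝ)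
      = 2*f₁^2*t^2 - 2*(f₁^2+f₀^2)*p + 2*f₀^2*s^2 := by
    have hcomm : (inner ℝ a₁ a₀ : ℝ) = p := real_inner_comm a₀ a₁
    rw [inner_sub_left, inner_smul_left, inner_smul_left, inner_sub_right, inner_sub_right,
      real_inner_self_eq_norm_sq, real_inner_self_eq_norm_sq]
    simp only [RCLike.star_def, starRingEnd_apply, star_trivial]
    rw [hp_def] at hcomm ⊢
    rw [hcomm]; ring
  rw [hnorm, hinner]
  have := fullscalar δ f₀ f₁ s t p hδ0 hδ1 hf0 hf0' (norm_nonneg _) hK0 hf1 hf1'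
    (norm_nonneg _) hK1 hp
  linarith
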